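/- For each point p on the unit round two-sphere S², the function G_p := G ∘ d_p, where G(r) = 1 + cos r · (-1 + log(2 sin r/(1 + cos r))) and d_p is the geodesic distance from p, satisfies (Δ + 2) G_p = 0 on S² \ {p, -p}. -/

import Mathlib

open Real Set

noncomputable def Gfun (r : ℝ) : ℝ := 1 + cos r * (-1 + log (2 * sin r / (1 + cos r)))

noncomputable def g1 (r : ℝ) : ℝ :=
  sin r - sin r * log (2 * sin r / (1 + cos r)) + cos r / sin r

lemma aux_facts {r : ℝ} (hr : r ∈ Ioo (0:ℝ) π) :
    0 < sin r ∧ 0 < 1 + cos r := by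
  have hs : 0 < sin r := Real.sin_pos_of_pos_of_lt_pi hr.1 hr.2
  refine ⟨hs, ?_⟩
  nlinarith [Real.sin_sq_add_cos_sq r]

lemma hasDerivAt_L {r : ℝ} (hr : r ∈ Ioo (0:ℝ) π) :
    HasDerivAt (fun x => log (2 * sin x / (1 + cos x))) (1 / sin r) r := by
  obtain ⟨hs, hc⟩ := aux_facts hr
  have hnum : HasDerivAt (fun x => 2 * sin x) (2 * cos r) r :=
    (Real.hasDerivAt_sin r).const_mul 2
  have hden : HasDerivAt (fun x => 1 + cos x) (-sin r) r := by
    simpa using (Real.hasDerivAt_cos r).const_add 1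
  have hu : HasDerivAt (fun x => 2 * sin x / (1 + cos x))
      ((2 * cos r * (1 + cos r) - 2 * sin r * (-sin r)) / (1 + cos r) ^ 2) r :=
    hnum.div hden hc.ne'
  have hne : 2 * sin r / (1 + cos r) ≠ 0 := by positivity
  have := hu.log hne
  convert this using 1
  field_simp
  linear_combination (-1) * Real.sin_sq_add_cos_sq r

lemma hasDerivAt_Gfun {r : ℝ} (hr : r ∈ Ioo (0:ℝ) π) :
    HasDerivAt Gfun (g1 r) r := by
  obtain ⟨hs, hc⟩ := aux_facts hr
  have hL := hasDerivAt_L hr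
  have h1 : HasDerivAt (fun x => -1 + log (2 * sin x / (1 + cos x))) (1 / sin r) r :=
    hL.const_add (-1)
  have h2 : HasDerivAt (fun x => cos x * (-1 + log (2 * sin x / (1 + cos x))))
      (-sin r * (-1 + log (2 * sin r / (1 + cos r))) + cos r * (1 / sin r)) r :=
    (Real.hasDerivAt_cos r).mul h1
  have h3 := h2.const_add 1
  unfold Gfun g1
  refine h3.congr_deriv ?_
  field_simp
  ring

lemma hasDerivAt_g1 {r : ℝ} (hr : r ∈ Ioo (0:ℝ) π) :
    HasDerivAt g1
      (cos r - cos r * log (2 * sin r / (1 + cos r)) - 1 - 1 / sin r ^ 2) r := by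
  obtain ⟨hs, hc⟩ := aux_facts hr
  have hL := hasDerivAt_L hr
  have h1 : HasDerivAt (fun x => sin x * log (2 * sin x / (1 + cos x)))
      (cos r * log (2 * sin r / (1 + cos r)) + sin r * (1 / sin r)) r :=
    (Real.hasDerivAt_sin r).mul hL
  have h2 : HasDerivAt (fun x => cos x / sin x)
      ((-sin r * sin r - cos r * cos r) / sin r ^ 2) r :=
    (Real.hasDerivAt_cos r).div (Real.hasDerivAt_sin r) hs.ne'
  have h3 := ((Real.hasDerivAt_sin r).sub h1).add h2
  unfold g1
  refine h3.congr_deriv ?_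
  field_simp
  nlinarith [Real.sin_sq_add_cos_sq r]

theorem Gfun_radial_linearized_equation :
    ∀ r ∈ Ioo (0:ℝ) π,
      deriv (deriv Gfun) r + (cos r / sin r) * deriv Gfun r + 2 * Gfun r = 0 := by
  intro r hr
  obtain ⟨hs, hc⟩ := aux_facts hr
  have hEq : deriv Gfun =ᶠ[nhds r] g1 := by
    filter_upwards [isOpen_Ioo.mem_nhds hr] with x hx
    exact (hasDerivAt_Gfun hx).deriv
  have hd1 : deriv Gfun r = g1 r := (hasDerivAt_Gfun hr).deriv
  have hd2 : deriv (deriv Gfun) r = deriv g1 r := hEq.deriv_eq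
  rw [hd1, hd2, (hasDerivAt_g1 hr).deriv]
  unfold Gfun g1
  field_simp
  nlinarith [Real.sin_sq_add_cos_sq r]
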